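/- Reordering does not impact dependencies involving committed transactions: if dep(t1, t2) holds with respect to the original commit timestamps and at least one of t1, t2 is committed (the other being committed or pending with respect to M), then dep(t1, t2) holds with respect to the new commit timestamps assigned by any reordering ρ. -/

import Mathlib

/-- A timestamp is a pair `(m, p)` of naturals, ordered lexicographically. -/
abbrev Timestamp : Type := ℕ ×ₗ ℕ

/-- A transaction: a start timestamp of the form `(m, 0)`, a commit timestamp
`(M, q)` with `q ≥ 1` and `start ≤ (M, 0)`, a finite read set of key/version
pairs with versions at most the start timestamp, and a finite write set of keys. -/
structure Txn (Key : Type) where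
  startTS : Timestamp
  commitTS : Timestamp
  start_snd : (ofLex startTS).2 = 0
  commit_pos : 1 ≤ (ofLex commitTS).2
  start_le : startTS ≤ toLex ((ofLex commitTS).1, 0)
  reads : Finset (Key × Timestamp)
  writes : Finset Key
  reads_snapshot : ∀ kv ∈ reads, kv.2 ≤ startTS

/-- Concurrency of two transactions with respect to a commit-timestamp assignment `C`. -/
def ConcurrentWith {Key : Type} (C : Txn Key → Timestamp) (t1 t2 : Txn Key) : Prop :=
  (C t1 < C t2 → t2.startTS < C t1) ∧ (C t2 < C t1 → t1.startTS < C t2)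

/-- Concurrency with respect to the original commit timestamps. -/
def Concurrent {Key : Type} (t1 t2 : Txn Key) : Prop :=
  ConcurrentWith (fun t => t.commitTS) t1 t2

/-- Write-write dependency `t1 →ww t2` w.r.t. commit assignment `C`. -/
def wwC {Key : Type} (C : Txn Key → Timestamp) (t1 t2 : Txn Key) : Prop :=
  t1 ≠ t2 ∧ (∃ k, k ∈ t1.writes ∧ k ∈ t2.writes) ∧ C t1 < C t2

/-- Write-read dependency `t1 →wr t2` w.r.t. commit assignment `C`. -/
def wrC {Key : Type} (C : Txn Key → Timestamp) (t1 t2 : Txn Key) : Prop :=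
  t1 ≠ t2 ∧ ∃ kv ∈ t2.reads, kv.1 ∈ t1.writes ∧ kv.2 = C t1

/-- Read-write dependency `t1 →rw t2` w.r.t. commit assignment `C`. -/
def rwC {Key : Type} (C : Txn Key → Timestamp) (t1 t2 : Txn Key) : Prop :=
  t1 ≠ t2 ∧ ∃ kv ∈ t1.reads, kv.1 ∈ t2.writes ∧ kv.2 < C t2

/-- The dependency relation: union of ww, wr and rw. -/
def depC {Key : Type} (C : Txn Key → Timestamp) (t1 t2 : Txn Key) : Prop :=
  wwC C t1 t2 ∨ wrC C t1 t2 ∨ rwC C t1 t2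

/-- `t` is committed with respect to the next block number `M`. -/
def Committed {Key : Type} (M : ℕ) (t : Txn Key) : Prop :=
  (ofLex t.commitTS).1 < M

/-- `t` is pending with respect to the next block number `M`:
its commit timestamp is `(M, p)` (with `p ≥ 1` automatic). -/
def Pending {Key : Type} (M : ℕ) (t : Txn Key) : Prop :=
  (ofLex t.commitTS).1 = M

/-- A reordering of the transactions in `T`: it assigns to each pending
transaction a new commit timestamp `(M, p')` with `p' ≥ 1`, injectively on `T`,
leaving committed transactions' commit timestamps (and, implicitly, all start
timestamps, read sets and write sets) unchanged. -/
structure Reordering {Key : Type} (M : ℕ) (T : Finset (Txn Key)) where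
  newCommit : Txn Key → Timestamp
  fix_committed : ∀ t ∈ T, Committed M t → newCommit t = t.commitTS
  pending_block : ∀ t ∈ T, Pending M t → (ofLex (newCommit t)).1 = M
  pending_pos : ∀ t ∈ T, Pending M t → 1 ≤ (ofLex (newCommit t)).2
  inj : ∀ t ∈ T, ∀ u ∈ T, newCommit t = newCommit u → t = u

/-- reordering does not impact dependencies involving committed
transactions: if `dep(t1, t2)` holds w.r.t. the original commit timestamps and
at least one of `t1, t2` is committed (the other committed or pending w.r.t.
`M`), then `dep(t1, t2)` holds w.r.t. the new commit timestamps assigned by any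
reordering `ρ` of `T`. -/
theorem reorder_preserves_committed_dep {Key : Type} (M : ℕ) (T : Finset (Txn Key))
    (ρ : Reordering M T) (t1 t2 : Txn Key) (h1 : t1 ∈ T) (h2 : t2 ∈ T)
    (hcp1 : Committed M t1 ∨ Pending M t1) (hcp2 : Committed M t2 ∨ Pending M t2)
    (hone : Committed M t1 ∨ Committed M t2)
    (hdep : depC (fun x => x.commitTS) t1 t2) :
    depC ρ.newCommit t1 t2 := by
  have lex_lt : ∀ a b : Timestamp, a < b ↔
      ((ofLex a).1 < (ofLex b).1 ∨ ((ofLex a).1 = (ofLex b).1 ∧ (ofLex a).2 < (ofLex b).2)) := by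
    intro a b
    exact Prod.Lex.lt_iff
  -- committed first coordinate less than M implies commitTS < any timestamp with first coord M
  have key : ∀ t : Txn Key, ∀ s : Timestamp, Committed M t → (ofLex s).1 = M →
      t.commitTS < s := by
    intro t s hc hs
    rw [lex_lt]
    unfold Committed at hc
    left; omega
  rcases hdep with ⟨hne, hk, hlt⟩ | ⟨hne, kv, hkv, hw, heq⟩ | ⟨hne, kv, hkv, hw, hlt⟩
  · -- ww
    left
    refine ⟨hne, hk, ?_⟩
    rcases hcp1 with hc1 | hp1
    · rw [ρ.fix_committed t1 h1 hc1]
      rcases hcp2 with hc2 | hp2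
      · rw [ρ.fix_committed t2 h2 hc2]; exact hlt
      · exact key t1 _ hc1 (ρ.pending_block t2 h2 hp2)
    · -- t1 pending: then t2 committed by hone, contradiction with hlt
      rcases hone with hc1 | hc2
      · exact absurd hp1 (by unfold Committed Pending at *; omega)
      · exfalso
        have := (lex_lt _ _).1 hlt
        simp only at this
        unfold Committed at hc2; unfold Pending at hp1; omega
  · -- wr
    right; left
    have hc1 : Committed M t1 := by
      rcases hcp1 with hc1 | hp1
      · exact hc1
      · exfalso
        have hsnap := t2.reads_snapshot kv hkv
        have hle := t2.start_le
        have hc2 : Committed M t2 := by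
          rcases hone with h | h
          · exact absurd hp1 (by unfold Committed Pending at *; omega)
          · exact h
        -- kv.2 = commitTS t1 with first coord M, but kv.2 ≤ start t2 ≤ (commit t2 .1, 0) with commit t2 .1 < M
        have h1' : kv.2 ≤ t2.startTS := hsnap
        have h2' : t2.startTS ≤ toLex ((ofLex t2.commitTS).1, 0) := hle
        have h3' : kv.2 ≤ toLex ((ofLex t2.commitTS).1, 0) := le_trans h1' h2'
        have h4' : kv.2 < t1.commitTS := by
          rw [lex_lt]
          rcases lt_or_eq_of_le h3' with h | h
          · rw [lex_lt] at h
            simp only [ofLex_toLex] at h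
            unfold Committed at hc2
            unfold Pending at hp1
            have := t1.commit_pos
            omega
          · have : (ofLex kv.2).1 = (ofLex t2.commitTS).1 ∧ (ofLex kv.2).2 = 0 := by
              rw [h]; simp
            unfold Committed at hc2; unfold Pending at hp1
            have := t1.commit_pos
            omega
        rw [heq] at h4'
        exact lt_irrefl _ h4'
    refine ⟨hne, kv, hkv, hw, ?_⟩
    rw [ρ.fix_committed t1 h1 hc1]; exact heq
  · -- rw
    right; right
    refine ⟨hne, kv, hkv, hw, ?_⟩
    rcases hcp2 with hc2 | hp2
    · rw [ρ.fix_committed t2 h2 hc2]; exact hlt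
    · -- t2 pending, so t1 committed
      have hc1 : Committed M t1 := by
        rcases hone with h | h
        · exact h
        · exact absurd hp2 (by unfold Committed Pending at *; omega)
      have hsnap := t1.reads_snapshot kv hkv
      have hle := t1.start_le
      have hfix : (ofLex kv.2).1 ≤ (ofLex t1.commitTS).1 := by
        have h3' : kv.2 ≤ toLex ((ofLex t1.commitTS).1, 0) := le_trans hsnap hle
        rcases lt_or_eq_of_le h3' with h | h
        · rw [lex_lt] at h; simp only [ofLex_toLex] at h; omega
        · have : (ofLex kv.2).1 = (ofLex t1.commitTS).1 := by rw [h]; simp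
          omega
      rw [lex_lt]
      left
      have hb := ρ.pending_block t2 h2 hp2
      unfold Committed at hc1
      omega
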